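/- Let H be a complex Hilbert space, V a unitary on H, P and Q orthogonal projections on H, p ∈ [0,1] a real number, and w₀, w₁, s₀, s₁ unit vectors in H satisfying Q w₀ = w₀, Q w₁ = 0, P s₀ = 0, P s₁ = s₁, V w₀ = √(1−p) s₀ + √p s₁, and V w₁ = √p s₀ − √(1−p) s₁. On the product Hilbert space H ×₂ H define the controlled-flip operator C(x,y) = ((I−P)x + P y, P x + (I−P) y) and let G = (V† ⊕ V†) ∘ C ∘ (V ⊕ V), where V ⊕ V and V† ⊕ V† act componentwise. Then applying Q componentwise to G(w₀, 0) yields ((1−p)·w₀, p·w₀); consequently ‖(Q ⊕ Q) G(w₀, 0)‖² = (1−p)² + p² and ‖G(w₀,0) − (Q ⊕ Q) G(w₀,0)‖² = 2p(1−p). -/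

import Mathlib

theorem stmt_11 {H : Type*} [NormedAddCommGroup H] [InnerProductSpace ℂ H] [CompleteSpace H]
    (V : H ≃ₗᵢ[ℂ] H) (P Q : H →L[ℂ] H)
    (hP : IsSelfAdjoint P) (hP2 : IsIdempotentElem P)
    (hQ : IsSelfAdjoint Q) (hQ2 : IsIdempotentElem Q)
    (p : ℝ) (hp0 : 0 ≤ p) (hp1 : p ≤ 1)
    (w₀ w₁ s₀ s₁ : H) (hw₀ : ‖w₀‖ = 1) (hw₁ : ‖w₁‖ = 1) (hs₀ : ‖s₀‖ = 1) (hs₁ : ‖s₁‖ = 1)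
    (hQw₀ : Q w₀ = w₀) (hQw₁ : Q w₁ = 0) (hPs₀ : P s₀ = 0) (hPs₁ : P s₁ = s₁)
    (hVw₀ : V w₀ = (Real.sqrt (1 - p) : ℂ) • s₀ + (Real.sqrt p : ℂ) • s₁)
    (hVw₁ : V w₁ = (Real.sqrt p : ℂ) • s₀ - (Real.sqrt (1 - p) : ℂ) • s₁) :
    let C : H × H → H × H := fun z => (z.1 - P z.1 + P z.2, P z.1 + (z.2 - P z.2))
    let G : H × H → H × H := fun z =>
      (V.symm (C (V z.1, V z.2)).1, V.symm (C (V z.1, V z.2)).2)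
    Q (G (w₀, 0)).1 = ((1 - p : ℝ) : ℂ) • w₀ ∧
    Q (G (w₀, 0)).2 = ((p : ℝ) : ℂ) • w₀ ∧
    ‖(WithLp.equiv 2 (H × H)).symm (Q (G (w₀, 0)).1, Q (G (w₀, 0)).2)‖ ^ 2
      = (1 - p) ^ 2 + p ^ 2 ∧
    ‖(WithLp.equiv 2 (H × H)).symm ((G (w₀, 0)).1 - Q (G (w₀, 0)).1,
        (G (w₀, 0)).2 - Q (G (w₀, 0)).2)‖ ^ 2 = 2 * p * (1 - p) := by
  intro C G
  set a : ℂ := (Real.sqrt (1 - p) : ℂ) with ha_def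
  set b : ℂ := (Real.sqrt p : ℂ) with hb_def
  have ha2 : a * a = ((1 - p : ℝ) : ℂ) := by
    rw [ha_def]; norm_cast; exact Real.mul_self_sqrt (by linarith)
  have hb2 : b * b = ((p : ℝ) : ℂ) := by
    rw [hb_def]; norm_cast; exact Real.mul_self_sqrt hp0
  have hab1 : a * a + b * b = 1 := by
    rw [ha2, hb2]; norm_cast; ring
  have hs0' : V.symm s₀ = a • w₀ + b • w₁ := by
    apply V.injective
    rw [V.apply_symm_apply, map_add, map_smul, map_smul, hVw₀, hVw₁]
    rw [smul_add, smul_sub, smul_smul, smul_smul, smul_smul, smul_smul]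
    symm
    have : (a * a) • s₀ + (a * b) • s₁ + ((b * b) • s₀ - (b * a) • s₁)
        = (a * a + b * b) • s₀ + (a * b - b * a) • s₁ := by module
    rw [this, hab1, mul_comm a b, sub_self, one_smul, zero_smul, add_zero]
  have hs1' : V.symm s₁ = b • w₀ - a • w₁ := by
    apply V.injective
    rw [V.apply_symm_apply, map_sub, map_smul, map_smul, hVw₀, hVw₁]
    rw [smul_add, smul_sub, smul_smul, smul_smul, smul_smul, smul_smul]
    symm
    have : (b * a) • s₀ + (b * b) • s₁ - ((a * b) • s₀ - (a * a) • s₁)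
        = (b * a - a * b) • s₀ + (b * b + a * a) • s₁ := by module
    rw [this, mul_comm b a, sub_self, zero_smul, zero_add, add_comm (b * b), hab1, one_smul]
  have hPVw0 : P (V w₀) = b • s₁ := by
    rw [hVw₀, map_add, map_smul, map_smul, hPs₀, hPs₁, smul_zero, zero_add]
  have hV0 : V (0 : H) = 0 := map_zero V
  have hG1 : (G (w₀, 0)).1 = ((1 - p : ℝ) : ℂ) • w₀ + (a * b) • w₁ := by
    show V.symm (V w₀ - P (V w₀) + P (V 0)) = _
    rw [hV0, map_zero, add_zero, hPVw0, hVw₀, add_sub_cancel_right, map_smul, hs0',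
      smul_add, smul_smul, smul_smul, ha2]
  have hG2 : (G (w₀, 0)).2 = ((p : ℝ) : ℂ) • w₀ - (b * a) • w₁ := by
    show V.symm (P (V w₀) + (V 0 - P (V 0))) = _
    rw [hV0, map_zero, sub_zero, add_zero, hPVw0, map_smul, hs1',
      smul_sub, smul_smul, smul_smul, hb2]
  have hQG1 : Q (G (w₀, 0)).1 = ((1 - p : ℝ) : ℂ) • w₀ := by
    rw [hG1, map_add, map_smul, map_smul, hQw₀, hQw₁, smul_zero, add_zero]
  have hQG2 : Q (G (w₀, 0)).2 = ((p : ℝ) : ℂ) • w₀ := by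
    rw [hG2, map_sub, map_smul, map_smul, hQw₀, hQw₁, smul_zero, sub_zero]
  refine ⟨hQG1, hQG2, ?_, ?_⟩
  · rw [WithLp.prod_norm_sq_eq_of_L2]
    rw [WithLp.equiv_symm_apply, WithLp.toLp_fst, WithLp.toLp_snd, hQG1, hQG2]
    rw [norm_smul, norm_smul, hw₀, mul_one, mul_one]
    rw [Complex.norm_real, Complex.norm_real, Real.norm_eq_abs, Real.norm_eq_abs]
    rw [abs_of_nonneg (by linarith), abs_of_nonneg hp0]
  · rw [WithLp.prod_norm_sq_eq_of_L2]
    rw [WithLp.equiv_symm_apply, WithLp.toLp_fst, WithLp.toLp_snd, hQG1, hQG2, hG1, hG2]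
    have h1 : ((1 - p : ℝ) : ℂ) • w₀ + (a * b) • w₁ - ((1 - p : ℝ) : ℂ) • w₀
        = (a * b) • w₁ := by abel
    have h2 : ((p : ℝ) : ℂ) • w₀ - (b * a) • w₁ - ((p : ℝ) : ℂ) • w₀
        = -((b * a) • w₁) := by abel
    rw [h1, h2, norm_neg, norm_smul, norm_smul, hw₁, mul_one, mul_one]
    have hab : ‖a * b‖ ^ 2 = p * (1 - p) := by
      rw [norm_mul, mul_pow, ha_def, hb_def, Complex.norm_real, Complex.norm_real,
        Real.norm_eq_abs, Real.norm_eq_abs, sq_abs, sq_abs,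
        Real.sq_sqrt (by linarith : (0:ℝ) ≤ 1 - p), Real.sq_sqrt hp0]
      ring
    rw [mul_comm b a, hab]; ring
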